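/- For the maximally coherent-type pure state on ℂ^d ⊗ ℂ^d given by ρ = (1/d) Σ_{i,j=0}^{d-1} |ii⟩⟨jj|, the minimal trace-norm distance from ρ to the set of separable states equals 2 − 2/d. -/

import Mathlib

open Matrix Kronecker
open scoped ComplexOrder

/-- The trace norm ‖M‖₁ = Tr√(M†M). -/
noncomputable def traceNorm {n : Type*} [Fintype n] [DecidableEq n]
    (M : Matrix n n ℂ) : ℝ :=
  (((Matrix.posSemidef_conjTranspose_mul_self M).1.eigenvectorUnitary.1 *
      diagonal (((↑) : ℝ → ℂ) ∘ (√·) ∘ (Matrix.posSemidef_conjTranspose_mul_self M).1.eigenvalues) *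
      (star (Matrix.posSemidef_conjTranspose_mul_self M).1.eigenvectorUnitary :
        Matrix n n ℂ)).trace).re

/-- A density matrix: positive semidefinite with unit trace. -/
def IsDensity {n : Type*} [Fintype n] (ρ : Matrix n n ℂ) : Prop :=
  ρ.PosSemidef ∧ ρ.trace = 1

/-- A bipartite state on ℂ^d⊗ℂ^d is separable if it is a convex combination of
tensor products of density matrices. -/
def Separable {d : ℕ} (σ : Matrix (Fin d × Fin d) (Fin d × Fin d) ℂ) : Prop :=
  ∃ (m : ℕ) (w : Fin m → ℝ) (A B : Fin m → Matrix (Fin d) (Fin d) ℂ),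
    (∀ i, 0 ≤ w i) ∧ (∑ i, w i = 1) ∧ (∀ i, IsDensity (A i)) ∧ (∀ i, IsDensity (B i)) ∧
    σ = ∑ i, (w i : ℂ) • (A i ⊗ₖ B i)

set_option linter.unusedSectionVars false
set_option maxHeartbeats 1000000
section
variable {n : Type*} [Fintype n] [DecidableEq n]

lemma psd_diag_nonneg {N : Matrix n n ℂ} (hN : N.PosSemidef) (i : n) : 0 ≤ N i i := by
  have h := hN.dotProduct_mulVec_nonneg (Pi.single i 1)
  simpa [dotProduct, Matrix.mulVec, Pi.single_apply, Finset.sum_ite_eq,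
    Finset.mem_univ, apply_ite] using h

lemma psd_smul {c : ℝ} (hc : 0 ≤ c) {N : Matrix n n ℂ} (hN : N.PosSemidef) :
    ((c:ℂ) • N).PosSemidef := by
  refine Matrix.PosSemidef.of_dotProduct_mulVec_nonneg ?_ ?_
  · have := hN.1
    unfold Matrix.IsHermitian at *
    rw [Matrix.conjTranspose_smul, this]
    simp [Complex.conj_ofReal]
  · intro x
    have h := hN.dotProduct_mulVec_nonneg x
    have : star x ⬝ᵥ ((c:ℂ) • N) *ᵥ x = (c:ℂ) * (star x ⬝ᵥ N *ᵥ x) := by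
      simp [Matrix.smul_mulVec, dotProduct_smul, smul_eq_mul]
    rw [this]
    exact mul_nonneg (by exact_mod_cast Complex.zero_le_real.mpr hc) h

lemma traceNorm_eq_of_sq {M S : Matrix n n ℂ} (hS : S.PosSemidef) (h : S ^ 2 = Mᴴ * M) :
    traceNorm M = S.trace.re := by
  open MatrixOrder in
  have key : (Matrix.posSemidef_conjTranspose_mul_self M).1.cfc Real.sqrt = S := by
    rw [← Matrix.IsHermitian.cfc_eq, ← cfcₙ_eq_cfc (hf0 := Real.sqrt_zero),
      ← CFC.sqrt_eq_real_sqrt _ (Matrix.posSemidef_conjTranspose_mul_self M).nonneg, ← h,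
      CFC.sqrt_sq S hS.nonneg]
  rw [traceNorm, ← key, Matrix.IsHermitian.cfc, Unitary.conjStarAlgAut_apply]
  rfl

lemma traceNorm_hermitian {M : Matrix n n ℂ} (hM : M.IsHermitian) :
    traceNorm M = ∑ i, |hM.eigenvalues i| := by
  set U : Matrix n n ℂ := (hM.eigenvectorUnitary : Matrix n n ℂ) with hUdef
  have hU1 : star U * U = 1 := Matrix.mem_unitaryGroup_iff'.mp hM.eigenvectorUnitary.2
  set S : Matrix n n ℂ := U * Matrix.diagonal (fun i => (Complex.ofReal |hM.eigenvalues i|)) * star U with hSdef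
  have hSpsd : S.PosSemidef := by
    have hd : (Matrix.diagonal (fun i => (Complex.ofReal |hM.eigenvalues i|))).PosSemidef := by
      refine Matrix.PosSemidef.diagonal (Pi.le_def.mpr fun i => ?_)
      simpa using Complex.zero_le_real.mpr (abs_nonneg (hM.eigenvalues i))
    simpa [hSdef, Matrix.star_eq_conjTranspose] using hd.mul_mul_conjTranspose_same U
  have mulUD : ∀ f g : n → ℂ, (U * Matrix.diagonal f * star U) * (U * Matrix.diagonal g * star U)
      = U * Matrix.diagonal (fun i => f i * g i) * star U := by
    intro f g
    simp only [Matrix.mul_assoc]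
    rw [← Matrix.mul_assoc (star U) U, hU1, Matrix.one_mul,
      ← Matrix.mul_assoc (Matrix.diagonal f), Matrix.diagonal_mul_diagonal]
  have hSq : S ^ 2 = Mᴴ * M := by
    rw [pow_two, hSdef, mulUD, hM.eq]
    conv_rhs => rw [hM.spectral_theorem, Unitary.conjStarAlgAut_apply]
    rw [mulUD]
    refine congrArg (fun D => U * D * star U) (congrArg Matrix.diagonal (funext fun i => ?_))
    show ((|hM.eigenvalues i| : ℝ) : ℂ) * ((|hM.eigenvalues i| : ℝ) : ℂ)
      = ((hM.eigenvalues i : ℝ) : ℂ) * ((hM.eigenvalues i : ℝ) : ℂ)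
    rw [← Complex.ofReal_mul, ← Complex.ofReal_mul, abs_mul_abs_self]
  rw [traceNorm_eq_of_sq hSpsd hSq, hSdef]
  rw [Matrix.trace_mul_cycle, hU1, Matrix.one_mul, Matrix.trace_diagonal]
  simp

lemma trace_mul_diag (K : Matrix n n ℂ) (f : n → ℂ) :
    (K * Matrix.diagonal f).trace = ∑ i, K i i * f i := by
  simp [Matrix.trace, Matrix.mul_apply, Matrix.diagonal_apply, Matrix.diag, mul_ite,
    Finset.sum_ite_eq, Finset.mem_univ]

lemma trace_mul_eq_sum {M : Matrix n n ℂ} (hM : M.IsHermitian) (H : Matrix n n ℂ) :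
    (H * M).trace = ∑ i,
      ((star (hM.eigenvectorUnitary : Matrix n n ℂ) * H * (hM.eigenvectorUnitary : Matrix n n ℂ)) i i)
        * ((hM.eigenvalues i : ℝ) : ℂ) := by
  set U : Matrix n n ℂ := (hM.eigenvectorUnitary : Matrix n n ℂ) with hUdef
  conv_lhs => rw [hM.spectral_theorem, Unitary.conjStarAlgAut_apply]
  rw [show H * (U * Matrix.diagonal (RCLike.ofReal ∘ hM.eigenvalues) * star U)
      = (H * U * Matrix.diagonal (RCLike.ofReal ∘ hM.eigenvalues)) * star U by
    simp only [Matrix.mul_assoc],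
    Matrix.trace_mul_comm, ← Matrix.mul_assoc, ← Matrix.mul_assoc, trace_mul_diag]
  rfl

lemma re_trace_mul_le {M H : Matrix n n ℂ} (hM : M.IsHermitian)
    (h1 : ((1 : Matrix n n ℂ) - H).PosSemidef) (h2 : ((1 : Matrix n n ℂ) + H).PosSemidef) :
    ((H * M).trace).re ≤ traceNorm M := by
  set U : Matrix n n ℂ := (hM.eigenvectorUnitary : Matrix n n ℂ) with hUdef
  have hU1 : star U * U = 1 := Matrix.mem_unitaryGroup_iff'.mp hM.eigenvectorUnitary.2
  set K : Matrix n n ℂ := star U * H * U with hKdef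
  have htr : (H * M).trace = ∑ i, K i i * ((hM.eigenvalues i : ℝ) : ℂ) := trace_mul_eq_sum hM H
  have hbound : ∀ i, |(K i i).re| ≤ 1 := by
    intro i
    have hp1 : 0 ≤ ((star U * ((1 : Matrix n n ℂ) - H) * U) i i) :=
      psd_diag_nonneg (h1.conjTranspose_mul_mul_same U) i
    have hp2 : 0 ≤ ((star U * ((1 : Matrix n n ℂ) + H) * U) i i) :=
      psd_diag_nonneg (h2.conjTranspose_mul_mul_same U) i
    have e1 : (star U * ((1 : Matrix n n ℂ) - H) * U) = 1 - K := by
      rw [Matrix.mul_sub, Matrix.sub_mul, Matrix.mul_one, hU1, hKdef]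
    have e2 : (star U * ((1 : Matrix n n ℂ) + H) * U) = 1 + K := by
      rw [Matrix.mul_add, Matrix.add_mul, Matrix.mul_one, hU1, hKdef]
    rw [e1] at hp1; rw [e2] at hp2
    have r1 := (Complex.le_def.mp hp1).1
    have r2 := (Complex.le_def.mp hp2).1
    simp only [Matrix.sub_apply, Matrix.add_apply, Matrix.one_apply_eq, Complex.sub_re,
      Complex.add_re, Complex.one_re, Complex.zero_re] at r1 r2
    rw [abs_le]; constructor <;> linarith
  rw [traceNorm_hermitian hM, htr]
  rw [Complex.re_sum]
  refine Finset.sum_le_sum fun i _ => ?_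
  have : (K i i * ((hM.eigenvalues i : ℝ) : ℂ)).re = (K i i).re * hM.eigenvalues i := by
    simp [Complex.mul_re]
  rw [this]
  calc (K i i).re * hM.eigenvalues i ≤ |(K i i).re * hM.eigenvalues i| := le_abs_self _
    _ = |(K i i).re| * |hM.eigenvalues i| := abs_mul _ _
    _ ≤ 1 * |hM.eigenvalues i| := by
        exact mul_le_mul_of_nonneg_right (hbound i) (abs_nonneg _)
    _ = |hM.eigenvalues i| := one_mul _

lemma re_trace_psd_mul {P Q : Matrix n n ℂ} (hP : P.PosSemidef) (hQ : Q.PosSemidef) :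
    0 ≤ ((Q * P).trace).re ∧ ((Q * P).trace).re ≤ (P.trace).re * (Q.trace).re := by
  set U : Matrix n n ℂ := (hP.1.eigenvectorUnitary : Matrix n n ℂ) with hUdef
  have hU1 : U * star U = 1 := Matrix.mem_unitaryGroup_iff.mp hP.1.eigenvectorUnitary.2
  set L : Matrix n n ℂ := star U * Q * U with hLdef
  have hLpsd : L.PosSemidef := hQ.conjTranspose_mul_mul_same U
  have htr : (Q * P).trace = ∑ i, L i i * ((hP.1.eigenvalues i : ℝ) : ℂ) := trace_mul_eq_sum hP.1 Q
  have htrL : L.trace = Q.trace := by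
    rw [hLdef, Matrix.trace_mul_cycle, hU1, Matrix.one_mul]
  have hdiag : ∀ i, 0 ≤ (L i i).re := fun i => (Complex.le_def.mp (psd_diag_nonneg hLpsd i)).1
  have hdle : ∀ i, (L i i).re ≤ (Q.trace).re := by
    intro i
    rw [← htrL]
    have : (L.trace).re = ∑ j, (L j j).re := by
      simp [Matrix.trace, Matrix.diag, Complex.re_sum]
    rw [this]
    exact Finset.single_le_sum (f := fun j => (L j j).re) (fun j _ => hdiag j) (Finset.mem_univ i)
  have hre : ((Q * P).trace).re = ∑ i, (L i i).re * hP.1.eigenvalues i := by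
    rw [htr, Complex.re_sum]
    refine Finset.sum_congr rfl fun i _ => ?_
    simp [Complex.mul_re]
  have hPtr : (P.trace).re = ∑ i, hP.1.eigenvalues i := by
    conv_lhs => rw [hP.1.spectral_theorem, Unitary.conjStarAlgAut_apply]
    rw [Matrix.trace_mul_cycle]
    rw [Matrix.mem_unitaryGroup_iff'.mp hP.1.eigenvectorUnitary.2, Matrix.one_mul,
      Matrix.trace_diagonal]
    simp [Complex.re_sum]
  constructor
  · rw [hre]
    exact Finset.sum_nonneg fun i _ => mul_nonneg (hdiag i) (hP.eigenvalues_nonneg i)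
  · rw [hre, hPtr, Finset.sum_mul]
    refine Finset.sum_le_sum fun i _ => ?_
    rw [mul_comm (hP.1.eigenvalues i)]
    exact mul_le_mul_of_nonneg_right (hdle i) (hP.eigenvalues_nonneg i)

section Main
variable {d : ℕ}

def vv (d : ℕ) : (Fin d × Fin d) → ℂ := fun a => if a.1 = a.2 then 1 else 0

def JJ (d : ℕ) : Matrix (Fin d × Fin d) (Fin d × Fin d) ℂ :=
  Matrix.of fun a b => vv d a * vv d b

def DD (d : ℕ) : Matrix (Fin d × Fin d) (Fin d × Fin d) ℂ := Matrix.diagonal (vv d)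

lemma vv_sq (a : Fin d × Fin d) : vv d a * vv d a = vv d a := by
  by_cases h : a.1 = a.2 <;> simp [vv, h]

lemma vv_conj (a : Fin d × Fin d) : (starRingEnd ℂ) (vv d a) = vv d a := by
  by_cases h : a.1 = a.2 <;> simp [vv, h]

lemma sum_vv : ∑ a, vv d a = (d : ℂ) := by
  rw [Fintype.sum_prod_type]
  simp [vv, Finset.sum_ite_eq, Finset.mem_univ]

lemma J_mul_J : JJ d * JJ d = (d : ℂ) • JJ d := by
  ext a b
  simp only [Matrix.mul_apply, JJ, Matrix.of_apply, Matrix.smul_apply, smul_eq_mul]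
  calc ∑ c, vv d a * vv d c * (vv d c * vv d b)
      = ∑ c, (vv d a * vv d b) * vv d c := by
        refine Finset.sum_congr rfl fun c _ => ?_
        calc vv d a * vv d c * (vv d c * vv d b) = vv d a * vv d b * (vv d c * vv d c) := by ring
          _ = vv d a * vv d b * vv d c := by rw [vv_sq]
    _ = (d : ℂ) * (vv d a * vv d b) := by rw [← Finset.mul_sum, sum_vv]; ring
lemma J_mul_D : JJ d * DD d = JJ d := by
  ext a b
  simp only [JJ, DD, Matrix.mul_apply, Matrix.of_apply, Matrix.diagonal_apply, mul_ite, mul_zero]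
  rw [Finset.sum_ite_eq' Finset.univ b (fun c => vv d a * vv d c * vv d c)]
  simp [mul_assoc, vv_sq b]

lemma D_mul_J : DD d * JJ d = JJ d := by
  ext a b
  simp only [JJ, DD, Matrix.mul_apply, Matrix.of_apply, Matrix.diagonal_apply, ite_mul, zero_mul]
  rw [Finset.sum_ite_eq Finset.univ a (fun c => vv d a * (vv d c * vv d b))]
  simp [← mul_assoc, vv_sq a]

lemma D_mul_D : DD d * DD d = DD d := by
  simp only [DD, Matrix.diagonal_mul_diagonal]
  exact congrArg _ (funext vv_sq)

lemma J_herm : (JJ d).IsHermitian := by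
  ext a b
  simp [JJ, Matrix.conjTranspose_apply, vv_conj, mul_comm]

lemma D_herm : (DD d).IsHermitian := by
  unfold DD Matrix.IsHermitian
  rw [Matrix.diagonal_conjTranspose]
  exact congrArg _ (funext fun a => vv_conj a)

lemma trace_J : (JJ d).trace = (d : ℂ) := by
  have : ∀ a, JJ d a a = vv d a := fun a => vv_sq a
  simp only [Matrix.trace, Matrix.diag]
  calc ∑ a, JJ d a a = ∑ a, vv d a := Finset.sum_congr rfl fun a _ => vv_sq a
    _ = (d : ℂ) := sum_vv

lemma trace_D : (DD d).trace = (d : ℂ) := by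
  simp only [DD, Matrix.trace_diagonal]
  exact sum_vv

lemma J_psd : (JJ d).PosSemidef := by
  refine Matrix.PosSemidef.of_dotProduct_mulVec_nonneg J_herm fun x => ?_
  have : star x ⬝ᵥ (JJ d) *ᵥ x = star (∑ a, vv d a * x a) * (∑ a, vv d a * x a) := by
    simp only [dotProduct, Matrix.mulVec, dotProduct, JJ, Matrix.of_apply,
      Pi.star_apply]
    rw [star_sum, Finset.sum_mul]
    refine Finset.sum_congr rfl fun a _ => ?_
    rw [Finset.mul_sum, Finset.mul_sum]
    refine Finset.sum_congr rfl fun c _ => ?_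
    rw [star_mul', Complex.star_def, vv_conj]
    ring
  rw [this]
  exact star_mul_self_nonneg _

lemma D_psd : (DD d).PosSemidef := by
  refine Matrix.PosSemidef.diagonal (Pi.le_def.mpr fun a => ?_)
  by_cases h : a.1 = a.2 <;> simp [vv, h]


noncomputable def rho (d : ℕ) : Matrix (Fin d × Fin d) (Fin d × Fin d) ℂ := ((d : ℂ))⁻¹ • JJ d

lemma rho_psd : (rho d).PosSemidef := by
  have h : ((d:ℂ))⁻¹ = (((d:ℝ)⁻¹ : ℝ) : ℂ) := by push_cast; ring
  rw [rho, h]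
  exact psd_smul (by positivity) J_psd

lemma trace_rho (hd : 0 < d) : (rho d).trace = 1 := by
  rw [rho, Matrix.trace_smul, trace_J, smul_eq_mul]
  field_simp

lemma rho_proj (hd : 0 < d) : rho d * rho d = rho d := by
  rw [rho, Matrix.smul_mul, Matrix.mul_smul, J_mul_J, smul_smul, smul_smul]
  congr 1
  have hdne : (d : ℂ) ≠ 0 := Nat.cast_ne_zero.mpr hd.ne'
  field_simp

lemma one_sub_rho_psd (hd : 0 < d) :
    ((1 : Matrix (Fin d × Fin d) (Fin d × Fin d) ℂ) - rho d).PosSemidef := by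
  have he : ((1 : Matrix (Fin d × Fin d) (Fin d × Fin d) ℂ) - rho d)ᴴ = 1 - rho d := by
    rw [Matrix.conjTranspose_sub, Matrix.conjTranspose_one, rho_psd.1.eq]
  have h := Matrix.posSemidef_conjTranspose_mul_self
    ((1 : Matrix (Fin d × Fin d) (Fin d × Fin d) ℂ) - rho d)
  rw [he, Matrix.sub_mul, Matrix.one_mul, Matrix.mul_sub, Matrix.mul_one, rho_proj hd] at h
  simpa using h

lemma trace_J_kron (A B : Matrix (Fin d) (Fin d) ℂ) :
    (JJ d * (A ⊗ₖ B)).trace = (A * Bᵀ).trace := by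
  simp only [Matrix.trace, Matrix.diag, Matrix.mul_apply, JJ, Matrix.of_apply,
    Matrix.kroneckerMap_apply, Matrix.transpose_apply, vv]
  rw [Fintype.sum_prod_type]
  simp only [Fintype.sum_prod_type, ite_mul, one_mul, zero_mul, mul_ite, mul_zero, mul_one,
    Finset.sum_ite_eq, Finset.sum_ite_eq', Finset.mem_univ, if_true]
  calc (∑ x : Fin d, ∑ x1 : Fin d, ∑ x2 : Fin d, if x = x1 then A x2 x * B x2 x1 else 0)
      = ∑ x : Fin d, ∑ x2 : Fin d, ∑ x1 : Fin d, if x = x1 then A x2 x * B x2 x1 else 0 := by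
        exact Finset.sum_congr rfl fun x _ => Finset.sum_comm
    _ = ∑ x : Fin d, ∑ x2 : Fin d, A x2 x * B x2 x := by
        simp only [Finset.sum_ite_eq, Finset.mem_univ, if_true]
    _ = ∑ x2 : Fin d, ∑ x : Fin d, A x2 x * B x2 x := Finset.sum_comm


lemma kron_conjT (A B : Matrix (Fin d) (Fin d) ℂ) : (A ⊗ₖ B)ᴴ = Aᴴ ⊗ₖ Bᴴ := by
  ext a b
  simp [Matrix.conjTranspose_apply, Matrix.kroneckerMap_apply, star_mul']

lemma lower_bound (hd : 0 < d) (σ : Matrix (Fin d × Fin d) (Fin d × Fin d) ℂ)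
    (hσ : Separable σ) : 2 - 2 / (d:ℝ) ≤ traceNorm (rho d - σ) := by
  obtain ⟨m, w, A, B, hw, hw1, hA, hB, hσeq⟩ := hσ
  have hdne : (d : ℝ) ≠ 0 := Nat.cast_ne_zero.mpr hd.ne'
  have hdneC : (d : ℂ) ≠ 0 := Nat.cast_ne_zero.mpr hd.ne'
  have hσherm : σ.IsHermitian := by
    rw [hσeq]
    show (∑ i, (w i : ℂ) • (A i ⊗ₖ B i))ᴴ = _
    rw [Matrix.conjTranspose_sum]
    refine Finset.sum_congr rfl fun i _ => ?_
    rw [Matrix.conjTranspose_smul, kron_conjT, (hA i).1.1.eq, (hB i).1.1.eq]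
    congr 1
    exact Complex.conj_ofReal _
  have hσtr : σ.trace = 1 := by
    rw [hσeq, Matrix.trace_sum]
    have : ∀ i, ((w i : ℂ) • (A i ⊗ₖ B i)).trace = (w i : ℂ) := by
      intro i
      rw [Matrix.trace_smul, Matrix.trace_kronecker, (hA i).2, (hB i).2]
      simp
    rw [Finset.sum_congr rfl fun i _ => this i, ← Complex.ofReal_sum, hw1, Complex.ofReal_one]
  have hM : (rho d - σ).IsHermitian := rho_psd.1.sub hσherm
  set H : Matrix (Fin d × Fin d) (Fin d × Fin d) ℂ := (2:ℂ) • rho d - 1 with hH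
  have h1 : ((1 : Matrix (Fin d × Fin d) (Fin d × Fin d) ℂ) - H).PosSemidef := by
    have e : (1 : Matrix (Fin d × Fin d) (Fin d × Fin d) ℂ) - H
        = (((2:ℝ)):ℂ) • ((1 : Matrix (Fin d × Fin d) (Fin d × Fin d) ℂ) - rho d) := by
      rw [hH]; push_cast; module
    rw [e]; exact psd_smul (by norm_num) (one_sub_rho_psd hd)
  have h2 : ((1 : Matrix (Fin d × Fin d) (Fin d × Fin d) ℂ) + H).PosSemidef := by
    have e : (1 : Matrix (Fin d × Fin d) (Fin d × Fin d) ℂ) + H = (((2:ℝ)):ℂ) • rho d := by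
      rw [hH]; push_cast; module
    rw [e]; exact psd_smul (by norm_num) rho_psd
  have key := re_trace_mul_le hM h1 h2
  have htrM : (rho d - σ).trace = 0 := by rw [Matrix.trace_sub, trace_rho hd, hσtr, sub_self]
  have hρσ : ((rho d * σ).trace).re ≤ 1/(d:ℝ) := by
    have hexp : rho d * σ = ∑ i, ((w i * (d:ℝ)⁻¹ : ℝ) : ℂ) • (JJ d * (A i ⊗ₖ B i)) := by
      rw [hσeq, Finset.mul_sum]
      refine Finset.sum_congr rfl fun i _ => ?_
      rw [rho, Matrix.smul_mul, Matrix.mul_smul, smul_smul]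
      push_cast
      congr 1
      ring
    rw [hexp, Matrix.trace_sum]
    have hterm : ∀ i, (((( w i * (d:ℝ)⁻¹ : ℝ)) : ℂ) • (JJ d * (A i ⊗ₖ B i))).trace.re
        ≤ w i * (d:ℝ)⁻¹ := by
      intro i
      rw [Matrix.trace_smul, smul_eq_mul, Complex.re_ofReal_mul]
      have hb := re_trace_psd_mul ((hB i).1.transpose) (hA i).1
      rw [Matrix.trace_transpose, (hA i).2, (hB i).2] at hb
      have h01 : ((A i * (B i)ᵀ).trace).re ≤ 1 := by simpa using hb.2
      have hnn : 0 ≤ w i * (d:ℝ)⁻¹ := mul_nonneg (hw i) (by positivity)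
      calc w i * (d:ℝ)⁻¹ * ((JJ d * (A i ⊗ₖ B i)).trace).re
          = w i * (d:ℝ)⁻¹ * ((A i * (B i)ᵀ).trace).re := by rw [trace_J_kron]
        _ ≤ w i * (d:ℝ)⁻¹ * 1 := mul_le_mul_of_nonneg_left h01 hnn
        _ = w i * (d:ℝ)⁻¹ := mul_one _
    calc ((∑ i, ((((w i * (d:ℝ)⁻¹ : ℝ)) : ℂ) • (JJ d * (A i ⊗ₖ B i))).trace)).re
        = ∑ i, ((((w i * (d:ℝ)⁻¹ : ℝ)) : ℂ) • (JJ d * (A i ⊗ₖ B i))).trace.re := by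
          rw [Complex.re_sum]
      _ ≤ ∑ i, w i * (d:ℝ)⁻¹ := Finset.sum_le_sum fun i _ => hterm i
      _ = 1/(d:ℝ) := by rw [← Finset.sum_mul, hw1, one_mul, one_div]
  have hHM : ((H * (rho d - σ)).trace).re = 2 - 2 * ((rho d * σ).trace).re := by
    rw [hH, Matrix.sub_mul, Matrix.smul_mul, Matrix.one_mul, Matrix.trace_sub, Matrix.trace_smul,
      Matrix.mul_sub, Matrix.trace_sub, rho_proj hd, trace_rho hd, htrM]
    simp [Complex.sub_re, Complex.mul_re]
    ring
  rw [hHM] at key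
  have h2d : (2:ℝ)/(d:ℝ) = 2 * (1/(d:ℝ)) := by ring
  rw [h2d]
  linarith


lemma rho_eq (hd : 0 < d) : (Matrix.of fun a b : Fin d × Fin d =>
    if a.1 = a.2 ∧ b.1 = b.2 then (1 / d : ℂ) else 0) = rho d := by
  ext a b
  simp only [Matrix.of_apply, rho, Matrix.smul_apply, JJ, Matrix.of_apply, smul_eq_mul, vv]
  by_cases h1 : a.1 = a.2 <;> by_cases h2 : b.1 = b.2 <;> simp [h1, h2, one_div]

lemma JD_one : JJ 1 = DD 1 := by
  ext a b
  have : a = b := Subsingleton.elim a b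
  subst this
  simp [JJ, DD, vv, Matrix.diagonal_apply, Subsingleton.elim a.1 a.2]

lemma sigmaStar_eq (hd : 0 < d) :
    (∑ i : Fin d, (((d:ℝ)⁻¹ : ℝ) : ℂ) •
      ((Matrix.diagonal (Pi.single i (1:ℂ))) ⊗ₖ (Matrix.diagonal (Pi.single i (1:ℂ)))))
    = (((d:ℝ)⁻¹ : ℝ) : ℂ) • DD d := by
  ext a b
  simp only [Matrix.sum_apply, Matrix.smul_apply, Matrix.kroneckerMap_apply,
    Matrix.diagonal_apply, Pi.single_apply, smul_eq_mul, DD, vv]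
  by_cases h1 : a.1 = b.1 <;> by_cases h2 : a.2 = b.2 <;>
    by_cases h3 : a.1 = a.2 <;>
    simp [h1, h2, h3, Prod.ext_iff, mul_ite, ite_mul, Finset.sum_ite_eq, Finset.mem_univ] <;>
    first
      | rfl
      | (intro hcon; exact (h3 hcon.symm).elim)
      | (intro hcon; exact (h3 hcon).elim)
      | skip

lemma mem_val (hd : 0 < d) :
    traceNorm (rho d - (((d:ℝ)⁻¹ : ℝ) : ℂ) • DD d) = 2 - 2/(d:ℝ) := by
  have hdne : (d : ℝ) ≠ 0 := Nat.cast_ne_zero.mpr hd.ne'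
  have hdneC : (d : ℂ) ≠ 0 := Nat.cast_ne_zero.mpr hd.ne'
  set c1 : ℝ := ((d:ℝ) - 2)/(d:ℝ)^2 with hc1def
  set c2 : ℝ := (d:ℝ)⁻¹ with hc2def
  set S : Matrix (Fin d × Fin d) (Fin d × Fin d) ℂ := ((c1:ℝ):ℂ) • JJ d + ((c2:ℝ):ℂ) • DD d
    with hSdef
  have hSpsd : S.PosSemidef := by
    rcases Nat.lt_or_ge d 2 with h | h
    · have hd1 : d = 1 := by omega
      subst hd1
      have : S = 0 := by
        rw [hSdef, JD_one, hc1def, hc2def]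
        norm_num
      rw [this]
      exact Matrix.PosSemidef.zero
    · have hc1 : 0 ≤ c1 := by
        rw [hc1def]
        have h2le : (2:ℝ) ≤ (d:ℝ) := by exact_mod_cast h
        exact div_nonneg (by linarith) (sq_nonneg _)
      exact (psd_smul hc1 J_psd).add (psd_smul (inv_nonneg.mpr (Nat.cast_nonneg d)) D_psd)
  have hDpsd : ((((d:ℝ)⁻¹ : ℝ) : ℂ) • DD d).PosSemidef := psd_smul (inv_nonneg.mpr (Nat.cast_nonneg d)) D_psd
  have hMherm : (rho d - (((d:ℝ)⁻¹ : ℝ) : ℂ) • DD d).IsHermitian := rho_psd.1.sub hDpsd.1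
  have hsq : S ^ 2 = (rho d - (((d:ℝ)⁻¹ : ℝ) : ℂ) • DD d)ᴴ * (rho d - (((d:ℝ)⁻¹ : ℝ) : ℂ) • DD d) := by
    rw [hMherm.eq, pow_two, hSdef, rho]
    have hcast : ((d:ℂ))⁻¹ = (((d:ℝ)⁻¹ : ℝ) : ℂ) := by push_cast; ring
    rw [hcast]
    simp only [Matrix.add_mul, Matrix.mul_add, Matrix.sub_mul, Matrix.mul_sub,
      Matrix.smul_mul, Matrix.mul_smul, J_mul_J, J_mul_D, D_mul_J, D_mul_D, smul_smul]
    match_scalars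
    · push_cast [hc1def, hc2def]
      field_simp
      ring
    · push_cast [hc1def, hc2def]
      field_simp
  rw [traceNorm_eq_of_sq hSpsd hsq, hSdef]
  rw [Matrix.trace_add, Matrix.trace_smul, Matrix.trace_smul, trace_J, trace_D]
  simp only [smul_eq_mul, Complex.add_re, Complex.re_ofReal_mul, Complex.natCast_re]
  rw [hc1def, hc2def]
  field_simp
  ring


lemma density_E (i : Fin d) : IsDensity (Matrix.diagonal (Pi.single i (1:ℂ))) := by
  constructor
  · refine Matrix.PosSemidef.diagonal (Pi.le_def.mpr fun j => ?_)
    by_cases h : j = i <;> simp [Pi.single_apply, h]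
  · rw [Matrix.trace_diagonal]
    simp [Pi.single_apply, Finset.sum_ite_eq, Finset.mem_univ]

end Main

end

/-- For the maximally entangled state ρ = (1/d) Σ_{i,j} |ii⟩⟨jj| on ℂ^d⊗ℂ^d,
the minimal trace-norm distance to the separable states equals 2 − 2/d. -/
theorem stmt_7 (d : ℕ) (hd : 0 < d) :
    IsLeast {x : ℝ | ∃ σ : Matrix (Fin d × Fin d) (Fin d × Fin d) ℂ,
        Separable σ ∧ x = traceNorm
          ((Matrix.of fun a b : Fin d × Fin d =>
            if a.1 = a.2 ∧ b.1 = b.2 then (1 / d : ℂ) else 0) - σ)}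
      (2 - 2 / d) := by

  have hdne : (d : ℝ) ≠ 0 := Nat.cast_ne_zero.mpr hd.ne'
  constructor
  · refine ⟨∑ i : Fin d, (((d:ℝ)⁻¹ : ℝ) : ℂ) •
      ((Matrix.diagonal (Pi.single i (1:ℂ))) ⊗ₖ (Matrix.diagonal (Pi.single i (1:ℂ)))), ?_, ?_⟩
    · refine ⟨d, fun _ => (d:ℝ)⁻¹, fun i => Matrix.diagonal (Pi.single i 1),
        fun i => Matrix.diagonal (Pi.single i 1), fun i => inv_nonneg.mpr (Nat.cast_nonneg d),
        ?_, fun i => density_E i, fun i => density_E i, rfl⟩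
      rw [Finset.sum_const, Finset.card_univ, Fintype.card_fin, nsmul_eq_mul]
      field_simp
    · rw [rho_eq hd, sigmaStar_eq hd, mem_val hd]
  · rintro x ⟨σ, hsep, rfl⟩
    rw [rho_eq hd]
    exact lower_bound hd σ hsep
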